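/- Let ε ∈ (1,2]. There exists a constant c > 0, depending only on ε, such that for all nonnegative reals A, B, κ, C, Q and every real number R: if R ≤ A·Q^{1/ε} + B·Q^{1/3} + κ and R ≥ Q − C, then R ≤ c·( A^{ε/(ε−1)} + B^{3/2} + C^{1/ε}·(A^{ε/(ε−1)} + B^{3/2})^{1−1/ε} + κ ). -/

import Mathlib

set_option maxHeartbeats 1000000

/-- Subadditivity of `x ^ p` on nonneg reals for `p ∈ [0,1]`. -/
lemma real_rpow_add_le_add_rpow (x y p : ℝ) (hx : 0 ≤ x) (hy : 0 ≤ y)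
    (hp0 : 0 ≤ p) (hp1 : p ≤ 1) : (x + y) ^ p ≤ x ^ p + y ^ p := by
  have h := NNReal.rpow_add_le_add_rpow x.toNNReal y.toNNReal hp0 hp1
  have h' := (NNReal.coe_le_coe).2 h
  simpa [NNReal.coe_rpow, Real.coe_toNNReal x hx, Real.coe_toNNReal y hy,
    Real.coe_toNNReal _ (add_nonneg hx hy)] using h'

/-- Elementary "peeling" estimate: `x * y ^ θ ≤ y/4 + (4x)^(1/(1-θ))`. -/
lemma peel (x y θ : ℝ) (hx : 0 ≤ x) (hy : 0 ≤ y) (hθ0 : 0 < θ) (hθ1 : θ < 1) :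
    x * y ^ θ ≤ y / 4 + (4 * x) ^ (1 / (1 - θ)) := by
  have h1θ : 0 < 1 - θ := by linarith
  have hx4 : (0:ℝ) ≤ 4 * x := by linarith
  set t : ℝ := (4 * x) ^ (1 / (1 - θ)) with ht
  have htnn : 0 ≤ t := Real.rpow_nonneg hx4 _
  rcases le_or_gt y t with h | h
  · have h2 : x * y ^ θ ≤ (4 * x) * t ^ θ := by
      have : y ^ θ ≤ t ^ θ := Real.rpow_le_rpow hy h hθ0.le
      nlinarith [Real.rpow_nonneg hy θ]
    have e1 : t ^ θ = (4 * x) ^ (θ / (1 - θ)) := by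
      rw [ht, ← Real.rpow_mul hx4]
      congr 1; field_simp
    have hesum : (1:ℝ) + θ / (1 - θ) = 1 / (1 - θ) := by field_simp; ring
    have e2 : (4 * x) * (4 * x) ^ (θ / (1 - θ)) = t := by
      nth_rewrite 1 [show (4 * x) = (4 * x) ^ (1:ℝ) from (Real.rpow_one _).symm]
      rw [← Real.rpow_add' hx4 (by rw [hesum]; positivity), hesum, ht]
    rw [e1] at h2
    rw [e2] at h2
    linarith
  · have hy0 : 0 < y := lt_of_le_of_lt htnn h
    have h4 : 4 * x ≤ y ^ (1 - θ) := by
      have := Real.rpow_le_rpow htnn h.le h1θ.le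
      rwa [ht, ← Real.rpow_mul hx4, one_div,
        inv_mul_cancel₀ h1θ.ne', Real.rpow_one] at this
    have h5 : y ^ (1 - θ) * y ^ θ = y := by
      rw [← Real.rpow_add hy0]; simp
    have hyθ : 0 ≤ y ^ θ := Real.rpow_nonneg hy0.le θ
    nlinarith

theorem self_bounding_two_terms
    (ε : ℝ) (hε1 : 1 < ε) (hε2 : ε ≤ 2) :
    ∃ c : ℝ, 0 < c ∧
      ∀ A B κ C Q : ℝ, ∀ R : ℝ, 0 ≤ A → 0 ≤ B → 0 ≤ κ → 0 ≤ C → 0 ≤ Q →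
        R ≤ A * Q ^ (1 / ε) + B * Q ^ ((1 : ℝ) / 3) + κ → Q - C ≤ R →
        R ≤ c * (A ^ (ε / (ε - 1)) + B ^ ((3 : ℝ) / 2)
            + C ^ (1 / ε) * (A ^ (ε / (ε - 1)) + B ^ ((3 : ℝ) / 2)) ^ (1 - 1 / ε) + κ) := by
  have hε0 : 0 < ε := by linarith
  have hεne : ε ≠ 0 := ne_of_gt hε0
  have hε1ne : ε - 1 ≠ 0 := by intro h; apply absurd hε1; linarith [sub_eq_zero.mp h]
  obtain ⟨p, hp⟩ : ∃ p : ℝ, p = ε / (ε - 1) := ⟨_, rfl⟩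
  have hp1 : 1 ≤ p := by
    rw [hp, le_div_iff₀ (by linarith)]; linarith
  have hppos : 0 < p := by linarith
  have hθ0 : 0 < 1 / ε := by positivity
  have hθ1 : 1 / ε < 1 := by
    rw [div_lt_one hε0]; linarith
  have hθhalf : (1:ℝ)/2 ≤ 1 / ε := by
    rw [div_le_div_iff₀ (by norm_num) hε0]; linarith
  have hpeq : 1 / (1 - 1 / ε) = p := by
    rw [hp]; field_simp
  have hpmul : p * (1 - 1 / ε) = 1 := by
    rw [hp]; field_simp
  have h4pn : (0:ℝ) ≤ (4:ℝ) ^ p := Real.rpow_nonneg (by norm_num) p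
  have hc4 : (16:ℝ) ≤ (4:ℝ) ^ p := by
    calc (16:ℝ) = 4 ^ (2:ℝ) := by
          rw [show (2:ℝ) = ((2:ℕ):ℝ) by norm_num, Real.rpow_natCast]; norm_num
      _ ≤ 4 ^ p := by
          apply Real.rpow_le_rpow_of_exponent_le (by norm_num)
          rw [hp, le_div_iff₀ (by linarith)]; linarith
  refine ⟨2 * (4:ℝ) ^ p + 18, by positivity, ?_⟩
  intro A B κ C Q R hA hB hκ hC hQ h1 h2
  rw [← hp]
  obtain ⟨S, hS⟩ : ∃ S : ℝ, S = A ^ p + B ^ ((3:ℝ)/2) := ⟨_, rfl⟩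
  obtain ⟨T, hT⟩ : ∃ T : ℝ, T = C ^ (1/ε) * S ^ (1 - 1/ε) := ⟨_, rfl⟩
  rw [← hS, ← hT]
  have hSA : 0 ≤ A ^ p := Real.rpow_nonneg hA _
  have hSB : 0 ≤ B ^ ((3:ℝ)/2) := Real.rpow_nonneg hB _
  have hSnn : 0 ≤ S := by rw [hS]; positivity
  have hTnn : 0 ≤ T := by
    rw [hT]
    exact mul_nonneg (Real.rpow_nonneg hC _) (Real.rpow_nonneg hSnn _)
  rcases le_or_gt R 0 with hR | hR
  · have hpos : (0:ℝ) ≤ (2 * (4:ℝ) ^ p + 18) * (S + T + κ) :=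
      mul_nonneg (by positivity) (by linarith)
    linarith
  have hRnn : 0 ≤ R := hR.le
  have hQRC : Q ≤ R + C := by linarith
  have hQ1 : Q ^ (1/ε) ≤ R ^ (1/ε) + C ^ (1/ε) :=
    (Real.rpow_le_rpow hQ hQRC hθ0.le).trans
      (real_rpow_add_le_add_rpow R C (1/ε) hRnn hC hθ0.le hθ1.le)
  have hQ2 : Q ^ ((1:ℝ)/3) ≤ R ^ ((1:ℝ)/3) + C ^ ((1:ℝ)/3) :=
    (Real.rpow_le_rpow hQ hQRC (by norm_num)).trans
      (real_rpow_add_le_add_rpow R C (1/3) hRnn hC (by norm_num) (by norm_num))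
  have h3 : R ≤ A * R ^ (1/ε) + A * C ^ (1/ε) + B * R ^ ((1:ℝ)/3)
      + B * C ^ ((1:ℝ)/3) + κ := by
    have hh1 : A * Q ^ (1/ε) ≤ A * R ^ (1/ε) + A * C ^ (1/ε) := by
      rw [← mul_add]; exact mul_le_mul_of_nonneg_left hQ1 hA
    have hh2 : B * Q ^ ((1:ℝ)/3) ≤ B * R ^ ((1:ℝ)/3) + B * C ^ ((1:ℝ)/3) := by
      rw [← mul_add]; exact mul_le_mul_of_nonneg_left hQ2 hB
    linarith
  have h4 : A * R ^ (1/ε) ≤ R / 4 + (4*A) ^ p := by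
    have := peel A R (1/ε) hA hRnn hθ0 hθ1
    rwa [hpeq] at this
  have h5 : B * R ^ ((1:ℝ)/3) ≤ R / 4 + (4*B) ^ ((3:ℝ)/2) := by
    have hps : 1 / (1 - (1:ℝ)/3) = 3/2 := by norm_num
    have := peel B R (1/3) hB hRnn (by norm_num) (by norm_num)
    rwa [hps] at this
  have h4A : (4*A) ^ p = 4 ^ p * A ^ p := Real.mul_rpow (by norm_num) hA
  have h4B : (4*B) ^ ((3:ℝ)/2) = 4 ^ ((3:ℝ)/2) * B ^ ((3:ℝ)/2) :=
    Real.mul_rpow (by norm_num) hB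
  have h4B' : (4:ℝ) ^ ((3:ℝ)/2) = 8 := by
    rw [show (4:ℝ) = 2 ^ (2:ℝ) by
        rw [show (2:ℝ) = ((2:ℕ):ℝ) by norm_num, Real.rpow_natCast]; norm_num,
      ← Real.rpow_mul (by norm_num)]
    rw [show (2:ℝ) * (3/2) = ((3:ℕ):ℝ) by norm_num, Real.rpow_natCast]; norm_num
  have h4' : A * R ^ (1/ε) ≤ R / 4 + 4 ^ p * A ^ p := by rw [← h4A]; exact h4
  have h5' : B * R ^ ((1:ℝ)/3) ≤ R / 4 + 8 * B ^ ((3:ℝ)/2) := by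
    rw [show (8:ℝ) = 4 ^ ((3:ℝ)/2) from h4B'.symm, ← h4B]; exact h5
  have hA_le : A ≤ S ^ (1 - 1/ε) := by
    have h1ε : (0:ℝ) < 1 - 1/ε := by linarith
    have he : (A ^ p) ^ (1 - 1/ε) = A := by
      rw [← Real.rpow_mul hA, hpmul, Real.rpow_one]
    rw [← he]
    exact Real.rpow_le_rpow hSA (by rw [hS]; linarith) h1ε.le
  have h6 : A * C ^ (1/ε) ≤ T := by
    have hCe : 0 ≤ C ^ (1/ε) := Real.rpow_nonneg hC _
    calc A * C ^ (1/ε) ≤ S ^ (1 - 1/ε) * C ^ (1/ε) :=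
          mul_le_mul_of_nonneg_right hA_le hCe
      _ = T := by rw [hT]; ring
  have hB_le : B ≤ S ^ ((2:ℝ)/3) := by
    have he : (B ^ ((3:ℝ)/2)) ^ ((2:ℝ)/3) = B := by
      rw [← Real.rpow_mul hB]; norm_num
    rw [← he]
    exact Real.rpow_le_rpow hSB (by rw [hS]; linarith) (by norm_num)
  have h7 : B * C ^ ((1:ℝ)/3) ≤ S + T := by
    rcases eq_or_lt_of_le hSnn with hS0 | hS0
    · have hB32 : B ^ ((3:ℝ)/2) = 0 := by
        have h0 : A ^ p + B ^ ((3:ℝ)/2) = 0 := by rw [← hS, ← hS0]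
        linarith
      have hB0 : B = 0 := by
        by_contra hne
        have hBpos : 0 < B := lt_of_le_of_ne hB (Ne.symm hne)
        have : 0 < B ^ ((3:ℝ)/2) := Real.rpow_pos_of_pos hBpos _
        linarith
      rw [hB0, zero_mul]; linarith
    · rcases le_or_gt C S with hCS | hCS
      · have hh1 : C ^ ((1:ℝ)/3) ≤ S ^ ((1:ℝ)/3) := Real.rpow_le_rpow hC hCS (by norm_num)
        have hh2 : 0 ≤ S ^ ((2:ℝ)/3) := Real.rpow_nonneg hSnn _
        have hh3 : 0 ≤ C ^ ((1:ℝ)/3) := Real.rpow_nonneg hC _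
        have hstep : B * C ^ ((1:ℝ)/3) ≤ S ^ ((2:ℝ)/3) * S ^ ((1:ℝ)/3) :=
          mul_le_mul hB_le hh1 hh3 hh2
        rw [← Real.rpow_add hS0, show (2:ℝ)/3 + 1/3 = 1 by norm_num,
          Real.rpow_one] at hstep
        linarith
      · have hCpos : 0 < C := hS0.trans hCS
        have hexp : (1:ℝ)/3 - 1/ε ≤ 0 := by linarith
        have hanti : C ^ ((1:ℝ)/3 - 1/ε) ≤ S ^ ((1:ℝ)/3 - 1/ε) :=
          Real.rpow_le_rpow_of_nonpos hS0 hCS.le hexp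
        have hsplit : C ^ ((1:ℝ)/3) = C ^ (1/ε) * C ^ ((1:ℝ)/3 - 1/ε) := by
          rw [← Real.rpow_add hCpos]; congr 1; ring
        have hSsplit : S ^ ((2:ℝ)/3) * S ^ ((1:ℝ)/3 - 1/ε) = S ^ (1 - 1/ε) := by
          rw [← Real.rpow_add hS0]; congr 1; ring
        have hCε : 0 ≤ C ^ (1/ε) := Real.rpow_nonneg hC _
        have hSe : 0 ≤ S ^ ((1:ℝ)/3 - 1/ε) := Real.rpow_nonneg hSnn _
        have hCe2 : 0 ≤ C ^ ((1:ℝ)/3 - 1/ε) := Real.rpow_nonneg hC _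
        have hh2 : 0 ≤ S ^ ((2:ℝ)/3) := Real.rpow_nonneg hSnn _
        have hstep : B * C ^ ((1:ℝ)/3)
            ≤ C ^ (1/ε) * (S ^ ((2:ℝ)/3) * S ^ ((1:ℝ)/3 - 1/ε)) := by
          calc B * C ^ ((1:ℝ)/3) = C ^ (1/ε) * (B * C ^ ((1:ℝ)/3 - 1/ε)) := by
                rw [hsplit]; ring
            _ ≤ C ^ (1/ε) * (S ^ ((2:ℝ)/3) * S ^ ((1:ℝ)/3 - 1/ε)) :=
                mul_le_mul_of_nonneg_left (mul_le_mul hB_le hanti hCe2 hh2) hCε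
        rw [hSsplit] at hstep
        rw [hT]; linarith
  have hfinal : R ≤ 2 * (4 ^ p * A ^ p) + 16 * B ^ ((3:ℝ)/2) + 4 * T + 2 * S + 2 * κ := by
    linarith
  have hgoal : 2 * (4 ^ p * A ^ p) + 16 * B ^ ((3:ℝ)/2) + 4 * T + 2 * S + 2 * κ
      ≤ (2 * (4:ℝ) ^ p + 18) * (S + T + κ) := by
    have e : (2 * (4:ℝ) ^ p + 18) * (S + T + κ)
        = 2 * (4 ^ p * A ^ p) + 18 * A ^ p + 2 * (4 ^ p * B ^ ((3:ℝ)/2))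
          + 18 * B ^ ((3:ℝ)/2) + 2 * (4 ^ p * T) + 18 * T
          + 2 * (4 ^ p * κ) + 18 * κ := by
      rw [hS]; ring
    have m1 := mul_nonneg h4pn hSB
    have m2 := mul_nonneg h4pn hTnn
    have m3 := mul_nonneg h4pn hκ
    rw [e]
    linarith [hS]
  linarith
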